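/- Under the periodic hypotheses (HP), assume additionally that Q is such that ν ≺ ν' implies a(ν) ≤ a(ν') for probabilities ν, ν' on S. Then the quasi-stationary distribution ν_⋆ of the periodic Yaglom limit satisfies a(ν_⋆) = inf{a(ν) : ν is a qsd}; that is, ν_⋆ is the minimal quasi-stationary distribution. -/
import Mathlib


open scoped Classical

noncomputable section

/-- `n`-step transition probabilities of a kernel on a countable state space. -/
def kpow {α : Type*} (Q : α → α → ℝ) : ℕ → α → α → ℝ
  | 0 => fun a b => if a = b then 1 else 0
  | n + 1 => fun a b => ∑' c, kpow Q n a c * Q c b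

/-- Law at time `n` of the chain started from `ν` on `S`, evaluated at a point of
`S ∪ {0}` (represented as `Option S`, with `none` the absorbing state `0`). -/
def evolve {S : Type*} (Q : Option S → Option S → ℝ) (ν : S → ℝ) (n : ℕ)
    (y : Option S) : ℝ :=
  ∑' x : S, ν x * kpow Q n (some x) y

/-- `νT_n(y) = νQ^n(y) / (1 - νQ^n(0))`: the law at time `n` conditioned on
non-absorption up to time `n`.  (For `n = 0` this is `ν` itself.) -/
def condT {S : Type*} (Q : Option S → Option S → ℝ) (ν : S → ℝ) (n : ℕ) (y : S) : ℝ :=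
  evolve Q ν n (some y) / (1 - evolve Q ν n none)

/-- A probability measure on a countable set, as a nonnegative function summing to 1. -/
def IsProbability {α : Type*} (ν : α → ℝ) : Prop :=
  (∀ x, 0 ≤ ν x) ∧ HasSum ν 1

/-- Stochastic domination `μ ≺ μ'`: there is a coupling of `μ` and `μ'` supported
on `{(ω, ω') : ω ≤ ω'}`. -/
def StochDom {α : Type*} [Preorder α] (μ μ' : α → ℝ) : Prop :=
  ∃ π : α × α → ℝ, (∀ p, 0 ≤ π p) ∧ (∀ a, HasSum (fun b => π (a, b)) (μ a)) ∧
    (∀ b, HasSum (fun a => π (a, b)) (μ' b)) ∧ ∀ p, π p ≠ 0 → p.1 ≤ p.2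

/-- A measure on a product space is irreducible if any element of its support can be
reached from any other by successive single-coordinate changes staying in the support. -/
def IrreducibleMeasure {ι α : Type*} (μ : (ι → α) → ℝ) : Prop :=
  ∀ a b, μ a ≠ 0 → μ b ≠ 0 →
    Relation.ReflTransGen
      (fun u v => μ u ≠ 0 ∧ μ v ≠ 0 ∧ ∃ k, ∀ i, i ≠ k → u i = v i) a b

/-- The (unnormalized) law `(x_0,...,x_n) ↦ ν(x_0)Q(x_0,x_1)⋯Q(x_{n-1},x_n)` of a
length-`n` trajectory staying in `S`. -/
def trajMeasure {S : Type*} (Q : Option S → Option S → ℝ) (ν : S → ℝ) (n : ℕ)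
    (x : Fin (n + 1) → S) : ℝ :=
  ν (x 0) * ∏ k : Fin n, Q (some (x k.castSucc)) (some (x k.succ))


/-- `a(ν) = 1 - νQ(0)`: the probability of remaining in `S` after one step,
starting from `ν`. -/
def stayProb {S : Type*} (Q : Option S → Option S → ℝ) (ν : S → ℝ) : ℝ :=
  1 - ∑' x : S, ν x * Q (some x) none

/-- `ν(S_j)`: total mass given by `ν` to the cyclic subclass with label `j`
(the classes being the fibers of the labeling function `c`). -/
def classMass {S : Type*} {d : ℕ} (c : S → ZMod d) (ν : S → ℝ) (j : ZMod d) : ℝ :=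
  ∑' x : S, if c x = j then ν x else 0

/-- `ν(· | S_j)`: conditional law of `ν` given the cyclic subclass with label `j`. -/
def condClass {S : Type*} {d : ℕ} (c : S → ZMod d) (ν : S → ℝ) (j : ZMod d) : S → ℝ :=
  fun y => if c y = j then ν y / classMass c ν j else 0


section Aux

variable {S : Type*} [Countable S]

lemma Qle1 {Q : Option S → Option S → ℝ} (hQnn : ∀ a b, 0 ≤ Q a b)
    (hQrow : ∀ a, HasSum (Q a) 1) (a b : Option S) : Q a b ≤ 1 :=
  le_hasSum (hQrow a) b fun c _ => hQnn a c

lemma kpow_one (Q : Option S → Option S → ℝ) (a b : Option S) :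
    kpow Q 1 a b = Q a b := by
  have h : ∀ c : Option S, kpow Q 0 a c * Q c b = if c = a then Q a b else 0 := by
    intro c
    simp only [kpow]
    by_cases h : c = a
    · subst h; simp
    · rw [if_neg (fun h' => h h'.symm), if_neg h, zero_mul]
  show (∑' c, kpow Q 0 a c * Q c b) = Q a b
  rw [tsum_congr h, tsum_ite_eq]

lemma hasSum_row_some {Q : Option S → Option S → ℝ}
    (hQrow : ∀ a, HasSum (Q a) 1) (x : Option S) :
    HasSum (fun y : S => Q x (some y)) (1 - Q x none) := by
  have h2 : HasSum (fun o : Option S => if o = none then Q x none else 0) (Q x none) := by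
    have := hasSum_ite_eq (none : Option S) (Q x none)
    exact this
  have h3 := (hQrow x).sub h2
  have h4 : (fun o : Option S => Q x o - if o = none then Q x none else 0)
      = fun o => if o = none then 0 else Q x o := by
    funext o; by_cases h : o = none
    · subst h; simp
    · simp [h]
  rw [h4] at h3
  have h5 : ∀ o : Option S, o ∉ Set.range (some : S → Option S) →
      (if o = none then 0 else Q x o) = 0 := by
    intro o ho
    cases o with
    | none => simp
    | some y => exact absurd ⟨y, rfl⟩ ho
  have h6 := ((Option.some_injective S).hasSum_iff h5).2 h3
  have h7 : ((fun o : Option S => if o = none then 0 else Q x o) ∘ (some : S → Option S))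
      = fun y : S => Q x (some y) := by
    funext y; simp [Function.comp]
  rwa [h7] at h6

lemma qsd_structure {d : ℕ} [NeZero d]
    (Q : Option S → Option S → ℝ) (c : S → ZMod d)
    (hQnn : ∀ a b, 0 ≤ Q a b) (hQrow : ∀ a, HasSum (Q a) 1)
    (hQx0 : ∀ x : S, Q (some x) none < 1)
    (hcQ : ∀ x y : S, Q (some x) (some y) ≠ 0 → c y = c x + 1)
    (ν : S → ℝ) (hν : IsProbability ν) (hqsd : ∀ y, condT Q ν 1 y = ν y) :
    0 < stayProb Q ν ∧
    (∀ j, IsProbability (condClass c ν j)) ∧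
    (∀ j, 0 ≤ stayProb Q (condClass c ν j)) ∧
    (stayProb Q ν) ^ d = ∏ j : ZMod d, stayProb Q (condClass c ν j) := by
  obtain ⟨hνnn, hν1⟩ := hν
  have hνs : Summable ν := hν1.summable
  have hQ1 : ∀ a b, Q a b ≤ 1 := Qle1 hQnn hQrow
  have hb_le : ∀ x, ν x * Q (some x) none ≤ ν x := fun x => by
    calc ν x * Q (some x) none ≤ ν x * 1 :=
          mul_le_mul_of_nonneg_left (hQ1 _ _) (hνnn x)
      _ = ν x := mul_one _
  have hb_nn : ∀ x, 0 ≤ ν x * Q (some x) none := fun x =>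
    mul_nonneg (hνnn x) (hQnn _ _)
  have hbs : Summable fun x => ν x * Q (some x) none :=
    hνs.of_nonneg_of_le hb_nn hb_le
  obtain ⟨x0, hx0⟩ : ∃ x, 0 < ν x := by
    by_contra h
    push_neg at h
    have hz : ν = fun _ => (0:ℝ) := funext fun x => le_antisymm (h x) (hνnn x)
    rw [hz] at hν1
    exact one_ne_zero (hν1.unique hasSum_zero)
  have ha : 0 < stayProb Q ν := by
    have hlt : (∑' x, ν x * Q (some x) none) < ∑' x, ν x :=
      Summable.tsum_lt_tsum hb_le (mul_lt_of_lt_one_right hx0 (hQx0 x0)) hbs hνs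
    rw [hν1.tsum_eq] at hlt
    exact sub_pos.2 hlt
  set a := stayProb Q ν with ha_def
  have hev_none : evolve Q ν 1 none = ∑' x, ν x * Q (some x) none :=
    tsum_congr fun x => by rw [kpow_one]
  have hev_some : ∀ y, evolve Q ν 1 (some y) = ∑' x, ν x * Q (some x) (some y) :=
    fun y => tsum_congr fun x => by rw [kpow_one]
  have hden : 1 - evolve Q ν 1 none = a := by
    rw [hev_none]; rfl
  have hq : ∀ y, (∑' x, ν x * Q (some x) (some y)) = a * ν y := by
    intro y
    have h := hqsd y
    rw [condT, hden, hev_some] at h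
    rw [div_eq_iff ha.ne'] at h
    rw [h, mul_comm]
  -- class masses
  have hind_nn : ∀ (j : ZMod d) (x : S), (0:ℝ) ≤ if c x = j then ν x else 0 := by
    intro j x; by_cases h : c x = j <;> simp [h, hνnn x]
  have hind_s : ∀ j, Summable (fun x => if c x = j then ν x else 0) := fun j =>
    hνs.of_nonneg_of_le (hind_nn j) (fun x => by by_cases h : c x = j <;> simp [h, hνnn x])
  have hm_nn : ∀ j, 0 ≤ classMass c ν j := fun j => tsum_nonneg (hind_nn j)
  have hm_sum : ∑ j : ZMod d, classMass c ν j = 1 := by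
    have hts := Summable.tsum_finsetSum (f := fun (j : ZMod d) (x : S) => if c x = j then ν x else 0)
      (s := Finset.univ) (fun j _ => hind_s j)
    calc ∑ j : ZMod d, classMass c ν j
        = ∑ j : ZMod d, ∑' x : S, if c x = j then ν x else 0 := rfl
      _ = ∑' x : S, ∑ j : ZMod d, if c x = j then ν x else 0 := hts.symm
      _ = ∑' x : S, ν x := by
          refine tsum_congr fun x => ?_
          rw [Finset.sum_ite_eq Finset.univ (c x) (fun _ => ν x)]
          simp
      _ = 1 := hν1.tsum_eq
  -- survival masses
  have hsv_nn : ∀ x, 0 ≤ ν x * (1 - Q (some x) none) := fun x =>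
    mul_nonneg (hνnn x) (by linarith [hQ1 (some x) none])
  have hsv_le : ∀ x, ν x * (1 - Q (some x) none) ≤ ν x := fun x => by
    calc ν x * (1 - Q (some x) none) ≤ ν x * 1 :=
          mul_le_mul_of_nonneg_left (by linarith [hQnn (some x) none]) (hνnn x)
      _ = ν x := mul_one _
  set A : ZMod d → ℝ := fun j => ∑' x, if c x = j then ν x * (1 - Q (some x) none) else 0
    with hA_def
  have hAind_nn : ∀ (j : ZMod d) x, (0:ℝ) ≤ if c x = j then ν x * (1 - Q (some x) none) else 0 :=
    fun j x => by by_cases h : c x = j <;> simp [h, hsv_nn x]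
  have hAind_s : ∀ j, Summable (fun x => if c x = j then ν x * (1 - Q (some x) none) else 0) :=
    fun j => hνs.of_nonneg_of_le (hAind_nn j)
      (fun x => by by_cases h : c x = j <;> simp [h, hsv_le x, hνnn x])
  have hA_nn : ∀ j, 0 ≤ A j := fun j => tsum_nonneg (hAind_nn j)
  have hA_le : ∀ j, A j ≤ classMass c ν j := fun j =>
    Summable.tsum_le_tsum (fun x => by by_cases h : c x = j <;> simp [h, hsv_le x])
      (hAind_s j) (hind_s j)
  -- B
  have hBind_nn : ∀ (j : ZMod d) x, (0:ℝ) ≤ if c x = j then ν x * Q (some x) none else 0 :=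
    fun j x => by by_cases h : c x = j <;> simp [h, hb_nn x]
  have hBind_s : ∀ j, Summable (fun x => if c x = j then ν x * Q (some x) none else 0) :=
    fun j => hνs.of_nonneg_of_le (hBind_nn j)
      (fun x => by by_cases h : c x = j <;> simp [h, hb_le x, hνnn x])
  have hA_eq : ∀ j, A j = classMass c ν j - ∑' x, if c x = j then ν x * Q (some x) none else 0 := by
    intro j
    rw [hA_def, classMass, ← Summable.tsum_sub (hind_s j) (hBind_s j)]
    refine tsum_congr fun x => ?_
    by_cases h : c x = j <;> simp [h] <;> ring
  -- stayProb of conditional law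
  have hstay_cond : ∀ j : ZMod d, classMass c ν j ≠ 0 →
      stayProb Q (condClass c ν j) = A j / classMass c ν j := by
    intro j hmj
    rw [stayProb]
    have h1 : ∀ x, condClass c ν j x * Q (some x) none
        = (if c x = j then ν x * Q (some x) none else 0) / classMass c ν j := by
      intro x; rw [condClass]
      by_cases h : c x = j <;> simp [h, div_mul_eq_mul_div]
    rw [tsum_congr h1, tsum_div_const, hA_eq j]
    field_simp
  -- recursion
  have hrec : ∀ j : ZMod d, a * classMass c ν (j + 1) = A j := by
    intro j
    set F : S → S → ℝ := fun x y => if c y = j + 1 then ν x * Q (some x) (some y) else 0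
      with hF_def
    have hF_nn : ∀ x y, 0 ≤ F x y := fun x y => by
      by_cases h : c y = j + 1 <;> simp [hF_def, h, mul_nonneg (hνnn x) (hQnn _ _)]
    have hF_le : ∀ x y, F x y ≤ ν x * Q (some x) (some y) := fun x y => by
      by_cases h : c y = j + 1 <;>
        simp [hF_def, h, mul_nonneg (hνnn x) (hQnn (some x) (some y))]
    have hrow : ∀ x, Summable (F x) := by
      intro x
      exact ((hasSum_row_some hQrow (some x)).mul_left (ν x)).summable.of_nonneg_of_le
        (hF_nn x) (hF_le x)
    have hrowsum : ∀ x, (∑' y, F x y) = if c x = j then ν x * (1 - Q (some x) none) else 0 := by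
      intro x
      by_cases h : c x = j
      · rw [if_pos h]
        have heq : ∀ y, F x y = ν x * Q (some x) (some y) := by
          intro y
          by_cases hy : c y = j + 1
          · simp [hF_def, hy]
          · have hQ0 : Q (some x) (some y) = 0 := by
              by_contra hQ0
              exact hy (by rw [hcQ x y hQ0, h])
            simp [hF_def, hy, hQ0]
        rw [tsum_congr heq, tsum_mul_left, (hasSum_row_some hQrow (some x)).tsum_eq]
      · rw [if_neg h]
        have heq : ∀ y, F x y = 0 := by
          intro y
          by_cases hy : c y = j + 1
          · have hQ0 : Q (some x) (some y) = 0 := by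
              by_contra hQ0
              have hcy := hcQ x y hQ0
              rw [hcy] at hy
              exact h (by exact add_right_cancel hy)
            simp [hF_def, hy, hQ0]
          · simp [hF_def, hy]
        rw [tsum_congr heq, tsum_zero]
    have hcolsum_s : Summable fun x => ∑' y, F x y := by
      refine hνs.of_nonneg_of_le (fun x => tsum_nonneg (hF_nn x)) (fun x => ?_)
      rw [hrowsum x]
      by_cases h : c x = j <;> simp [h, hsv_le x, hνnn x]
    have hFsum : Summable (Function.uncurry F) :=
      (summable_prod_of_nonneg (f := Function.uncurry F) (fun p => hF_nn p.1 p.2)).2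
        ⟨hrow, hcolsum_s⟩
    have hcol : ∀ y, Summable fun x => F x y := by
      intro y
      refine hνs.of_nonneg_of_le (fun x => hF_nn x y) (fun x => ?_)
      calc F x y ≤ ν x * Q (some x) (some y) := hF_le x y
        _ ≤ ν x * 1 := mul_le_mul_of_nonneg_left (hQ1 _ _) (hνnn x)
        _ = ν x := mul_one _
    have h1 : a * classMass c ν (j + 1) = ∑' y, if c y = j + 1 then a * ν y else 0 := by
      rw [classMass, ← tsum_mul_left]
      exact tsum_congr fun y => by by_cases h : c y = j + 1 <;> simp [h]
    have h2 : (∑' y, if c y = j + 1 then a * ν y else 0) = ∑' y, ∑' x, F x y := by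
      refine tsum_congr fun y => ?_
      by_cases h : c y = j + 1
      · rw [if_pos h, ← hq y]
        exact tsum_congr fun x => by simp [hF_def, h]
      · simp only [if_neg h]
        refine ((tsum_congr fun x => ?_).trans tsum_zero).symm
        simp [hF_def, h]
    have hcomm : (∑' y, ∑' x, F x y) = ∑' x, ∑' y, F x y :=
      Summable.tsum_comm' hFsum hrow hcol
    rw [h1, h2, hcomm, hA_def]
    exact tsum_congr hrowsum
  -- positivity of class masses
  have hm_pos : ∀ j, 0 < classMass c ν j := by
    by_contra h
    push_neg at h
    obtain ⟨j0, hj0⟩ := h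
    have hj0' : classMass c ν j0 = 0 := le_antisymm hj0 (hm_nn j0)
    have hzero : ∀ k : ℕ, classMass c ν (j0 + (k : ZMod d)) = 0 := by
      intro k
      induction k with
      | zero => simpa using hj0'
      | succ n ih =>
        have hA0 : A (j0 + (n : ZMod d)) = 0 :=
          le_antisymm (by rw [← ih] at *; exact (hA_le _).trans_eq ih) (hA_nn _)
        have hr := hrec (j0 + (n : ZMod d))
        rw [hA0] at hr
        have : classMass c ν (j0 + (n : ZMod d) + 1) = 0 :=
          (mul_eq_zero.1 hr).resolve_left ha.ne'
        have hcast : ((n + 1 : ℕ) : ZMod d) = (n : ZMod d) + 1 := by push_cast; ring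
        rw [hcast, ← add_assoc]
        exact this
    have hall : ∀ r : ZMod d, classMass c ν r = 0 := by
      intro r
      have := hzero (r - j0).val
      rwa [ZMod.natCast_zmod_val, show j0 + (r - j0) = r by ring] at this
    rw [Finset.sum_congr rfl (fun j _ => hall j), Finset.sum_const, smul_zero] at hm_sum
    exact one_ne_zero hm_sum.symm
  -- conditional laws are probabilities
  have hcond_prob : ∀ j, IsProbability (condClass c ν j) := by
    intro j
    refine ⟨fun y => ?_, ?_⟩
    · rw [condClass]
      by_cases h : c y = j <;> simp [h, div_nonneg (hνnn y) (hm_nn j)]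
    · have h1 : HasSum (fun x => if c x = j then ν x else 0) (classMass c ν j) :=
        (hind_s j).hasSum
      have h2 := h1.div_const (classMass c ν j)
      rw [div_self (hm_pos j).ne'] at h2
      have h3 : condClass c ν j = fun y => (if c y = j then ν y else 0) / classMass c ν j := by
        funext y; rw [condClass]
        by_cases h : c y = j <;> simp [h]
      rw [h3]
      exact h2
  have hcond_nn : ∀ j, 0 ≤ stayProb Q (condClass c ν j) := by
    intro j
    rw [hstay_cond j (hm_pos j).ne']
    exact div_nonneg (hA_nn j) (hm_nn j)
  refine ⟨ha, hcond_prob, hcond_nn, ?_⟩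
  have h1 : ∏ j : ZMod d, (a * classMass c ν (j + 1))
      = ∏ j : ZMod d, (classMass c ν j * stayProb Q (condClass c ν j)) := by
    refine Finset.prod_congr rfl fun j _ => ?_
    rw [hrec j, hstay_cond j (hm_pos j).ne', mul_comm, div_mul_cancel₀ _ (hm_pos j).ne']
  have h2 : ∏ j : ZMod d, (a * classMass c ν (j + 1))
      = a ^ d * ∏ j : ZMod d, classMass c ν (j + 1) := by
    rw [Finset.prod_mul_distrib, Finset.prod_const, Finset.card_univ, ZMod.card]
  have h3 : ∏ j : ZMod d, classMass c ν (j + 1) = ∏ j : ZMod d, classMass c ν j :=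
    Fintype.prod_equiv (Equiv.addRight (1 : ZMod d)) _ _ fun j => rfl
  have h4 : ∏ j : ZMod d, (classMass c ν j * stayProb Q (condClass c ν j))
      = (∏ j : ZMod d, classMass c ν j) * ∏ j : ZMod d, stayProb Q (condClass c ν j) :=
    Finset.prod_mul_distrib
  have hP : 0 < ∏ j : ZMod d, classMass c ν j := Finset.prod_pos fun j _ => hm_pos j
  rw [h2, h3, h4] at h1
  have h5 : a ^ d * ∏ j : ZMod d, classMass c ν j
      = (∏ j : ZMod d, stayProb Q (condClass c ν j)) * ∏ j : ZMod d, classMass c ν j := by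
    rw [h1]; ring
  exact mul_right_cancel₀ hP.ne' h5

end Aux

/-- Under the periodic hypotheses (HP), if moreover `ν ≺ ν'` implies `a(ν) ≤ a(ν')`,
then the qsd `ν_⋆` produced by the periodic Yaglom limit of `δ₁` satisfies
`a(ν_⋆) = inf{a(ν) : ν qsd}`: it is the minimal qsd. -/
theorem periodic_minimal_qsd {S : Type*} [PartialOrder S] [Countable S]
    (Q : Option S → Option S → ℝ) (one : S) (d : ℕ) (hd : 2 ≤ d)
    (c : S → ZMod d)
    (hmin : ∀ x : S, one ≤ x)
    (hQnn : ∀ a b, 0 ≤ Q a b)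
    (hQrow : ∀ a, HasSum (Q a) 1)
    (hQ00 : Q none none = 1)
    (hQx0 : ∀ x : S, Q (some x) none < 1)
    (hirr : ∀ x y : S, ∃ n : ℕ, 1 ≤ n ∧ 0 < kpow Q n (some x) (some y))
    (hperiod : ∀ x : S,
      (∀ n, 1 ≤ n → 0 < kpow Q n (some x) (some x) → d ∣ n) ∧
      (∀ m : ℕ, (∀ n, 1 ≤ n → 0 < kpow Q n (some x) (some x) → m ∣ n) → m ∣ d))
    (hc1 : c one = 0)
    (hcQ : ∀ x y : S, Q (some x) (some y) ≠ 0 → c y = c x + 1)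
    (hclass : ∀ x y : S, c x = c y ↔
      ∃ l : ℕ, 1 ≤ l ∧ 0 < kpow Q (d * l) (some x) (some y))
    (hirrtraj : ∀ n : ℕ, 1 ≤ n →
      IrreducibleMeasure (trajMeasure Q (fun x => if x = one then 1 else 0) n))
    (he2 : ∀ x x' z z' : S, c x = c x' → x ≤ x' → z ≤ z' →
      0 < kpow Q 2 (some x) (some z) → 0 < kpow Q 2 (some x') (some z') →
      StochDom
        (fun w : S => Q (some x) (some w) * Q (some w) (some z) /
          kpow Q 2 (some x) (some z))
        (fun w : S => Q (some x') (some w) * Q (some w) (some z') /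
          kpow Q 2 (some x') (some z')))
    (he3 : ∀ x x' : S, c x = c x' → x ≤ x' →
      StochDom (fun w : S => Q (some x) (some w) / (1 - Q (some x) none))
        (fun w : S => Q (some x') (some w) / (1 - Q (some x') none)))
    (hmono : ∀ ν ν' : S → ℝ, IsProbability ν → IsProbability ν' →
      StochDom ν ν' → stayProb Q ν ≤ stayProb Q ν')
    (νstar : S → ℝ) (hνstar : IsProbability νstar)
    (hqsdstar : ∀ y, condT Q νstar 1 y = νstar y)
    (hlim : ∀ j : ℕ, 1 ≤ j → j ≤ d → ∀ y : S, Filter.Tendsto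
      (fun k => condT Q (fun x => if x = one then 1 else 0) (d * k + j - 1) y)
      Filter.atTop (nhds (condClass c νstar ((j - 1 : ℕ) : ZMod d) y)))
    (hdomstar : ∀ ν : S → ℝ, IsProbability ν → (∀ y, condT Q ν 1 y = ν y) →
      ∀ j : ℕ, 1 ≤ j → j ≤ d →
        StochDom (condClass c νstar ((j - 1 : ℕ) : ZMod d))
          (condClass c ν ((j - 1 : ℕ) : ZMod d))) :
    stayProb Q νstar =
      sInf {a : ℝ | ∃ ν : S → ℝ, IsProbability ν ∧ (∀ y, condT Q ν 1 y = ν y) ∧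
        a = stayProb Q ν} := by
  haveI : NeZero d := ⟨by omega⟩
  obtain ⟨hstar_pos, hstar_prob, hstar_cond_nn, hstar_pow⟩ :=
    qsd_structure Q c hQnn hQrow hQx0 hcQ νstar hνstar hqsdstar
  have hmem : stayProb Q νstar ∈ {a : ℝ | ∃ ν : S → ℝ, IsProbability ν ∧
      (∀ y, condT Q ν 1 y = ν y) ∧ a = stayProb Q ν} := ⟨νstar, hνstar, hqsdstar, rfl⟩
  have hlb : ∀ b ∈ {a : ℝ | ∃ ν : S → ℝ, IsProbability ν ∧
      (∀ y, condT Q ν 1 y = ν y) ∧ a = stayProb Q ν}, stayProb Q νstar ≤ b := by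
    rintro b ⟨ν, hν, hq, rfl⟩
    obtain ⟨hpos, hprob, hnn, hpow⟩ := qsd_structure Q c hQnn hQrow hQx0 hcQ ν hν hq
    have hle : ∀ j : ZMod d,
        stayProb Q (condClass c νstar j) ≤ stayProb Q (condClass c ν j) := by
      intro j
      have hvlt := ZMod.val_lt j
      have h3 := hdomstar ν hν hq (j.val + 1) (by omega) (by omega)
      have h4 : ((j.val + 1 - 1 : ℕ) : ZMod d) = j := by
        simp [ZMod.natCast_zmod_val]
      rw [h4] at h3
      exact hmono _ _ (hstar_prob j) (hprob j) h3
    have hprodle : (∏ j : ZMod d, stayProb Q (condClass c νstar j))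
        ≤ ∏ j : ZMod d, stayProb Q (condClass c ν j) :=
      Finset.prod_le_prod (fun j _ => hstar_cond_nn j) (fun j _ => hle j)
    have hpowle : stayProb Q νstar ^ d ≤ stayProb Q ν ^ d := by
      rw [hstar_pow, hpow]; exact hprodle
    exact (pow_le_pow_iff_left₀ hstar_pos.le hpos.le (by omega)).1 hpowle
  exact le_antisymm (le_csInf ⟨_, hmem⟩ hlb) (csInf_le ⟨_, hlb⟩ hmem)
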